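/- Let X be a set, let x_1,...,x_k (k ≥ 2) be pairwise distinct elements of X, and let e_1,...,e_k be idempotents in T(X) such that e_i(x_i) = x_{i+1} for 1 ≤ i ≤ k, where x_{k+1} = x_1. Then there exists j ∈ {2,...,k} such that e_1 e_j ≠ e_j e_1. -/

import Mathlib

open Fin.NatCast in
theorem cycle_gives_noncommuting_idempotents {X : Type*} {k : ℕ} (hk : 2 ≤ k)
    (x : Fin k → X) (hx : Function.Injective x)
    (e : Fin k → (X → X)) (he : ∀ i, e i ∘ e i = e i)
    (hstep : ∀ i : Fin k, e i (x i) = x (i + ⟨1, by omega⟩)) :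
    ∃ j : Fin k, j ≠ ⟨0, by omega⟩ ∧
      e ⟨0, by omega⟩ ∘ e j ≠ e j ∘ e ⟨0, by omega⟩ := by
  haveI : NeZero k := ⟨by omega⟩
  by_contra h
  push_neg at h
  set z0 : Fin k := ⟨0, by omega⟩ with hz0
  have hone : (⟨1, by omega⟩ : Fin k) = (1 : Fin k) := by
    ext; simp [Fin.val_one, Nat.mod_eq_of_lt (by omega : 1 < k)]
  have hstep' : ∀ i : Fin k, e i (x i) = x (i + 1) := by
    intro i; rw [← hone]; exact hstep i
  have hcomm : ∀ j : Fin k, e z0 ∘ e j = e j ∘ e z0 := by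
    intro j
    by_cases hj : j = z0
    · rw [hj]
    · exact h j hj
  -- e z0 fixes x ((n+1 : ℕ) : Fin k) for all n
  have key : ∀ n : ℕ, e z0 (x ((n + 1 : ℕ) : Fin k)) = x ((n + 1 : ℕ) : Fin k) := by
    intro n
    induction n with
    | zero =>
      have h1 : ((0 + 1 : ℕ) : Fin k) = z0 + 1 := by
        ext; simp [hz0, Fin.add_def, Fin.val_natCast, Nat.mod_eq_of_lt (by omega : 1 < k)]
      rw [h1, ← hstep' z0]
      have := congrFun (he z0) (x z0)
      simpa using this
    | succ n ih =>
      set j : Fin k := ((n + 1 : ℕ) : Fin k) with hjdef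
      have h2 : ((n + 1 + 1 : ℕ) : Fin k) = j + 1 := by
        simp [hjdef]
      rw [h2, ← hstep' j]
      have hc := congrFun (hcomm j) (x j)
      simp only [Function.comp_apply] at hc
      rw [hc, ih]
  have hk0 : ((k - 1 + 1 : ℕ) : Fin k) = z0 := by
    have : k - 1 + 1 = k := by omega
    rw [this]
    ext
    simp [hz0, Fin.val_natCast]
  have hfix : e z0 (x z0) = x z0 := by
    have := key (k - 1)
    rwa [hk0] at this
  have hne : e z0 (x z0) = x (z0 + 1) := hstep' z0
  rw [hfix] at hne
  have h3 := congrArg Fin.val (hx hne)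
  simp [hz0, Fin.add_def, Nat.mod_eq_of_lt (by omega : 1 < k)] at h3
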